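/- Let n ≥ 1 and let D be any subset of the distinguished vertices {a₀,…,a_n, b₀,…,b_n} of the graph Ḡ_n. For 0 ≤ j ≤ n define s_j = 1 if both a_j and b_j lie in D, s_j = −1 if neither a_j nor b_j lies in D, and s_j = 0 if exactly one of them lies in D. Then the number of perfect matchings of the induced subgraph of Ḡ_n obtained by deleting the vertices of D equals 2^{#{j : s_j = −1}} if the sequence (s₀,…,s_n) satisfies that every partial sum s₀ + ⋯ + s_m (0 ≤ m ≤ n) equals 0 or 1 and the total sum s₀ + ⋯ + s_n equals 1 (equivalently, the nonzero s_j alternate in sign beginning and ending with +1), and it equals 0 otherwise. -/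

import Mathlib

/-- The number of perfect matchings of a simple graph `G`: the number of subsets `E'`
of the edge set such that every vertex is incident to exactly one edge of `E'`. -/
noncomputable def numPM {V : Type*} (G : SimpleGraph V) : ℕ :=
  Set.ncard {E' : Set (Sym2 V) | E' ⊆ G.edgeSet ∧ ∀ v : V, ∃! e ∈ E', v ∈ e}

/-- Vertices of the graph `Ḡₙ`: distinguished vertices `a 0, …, a n`, `b 0, …, b n`,
inner vertices `c 1, …, c n` (here `c i` for `i : Fin n` stands for `c (i+1)`),
and the cap vertices `u, m` and `u', m'`. -/
inductive GbarV (n : ℕ) where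
  | a (i : Fin (n + 1))
  | b (i : Fin (n + 1))
  | c (i : Fin n)
  | u
  | m
  | u'
  | m'

/-- The edge relation of `Ḡₙ`: `u–m`, `m–a₀`, `m–b₀`, `u'–m'`, `m'–aₙ`, `m'–bₙ`, and for
each `1 ≤ i ≤ n` the four edges `cᵢ–a_{i−1}`, `cᵢ–b_{i−1}`, `cᵢ–aᵢ`, `cᵢ–bᵢ`. -/
def GbarRel (n : ℕ) : GbarV n → GbarV n → Prop := fun x y =>
  (x = GbarV.u ∧ y = GbarV.m) ∨
  (x = GbarV.m ∧ (y = GbarV.a 0 ∨ y = GbarV.b 0)) ∨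
  (x = GbarV.u' ∧ y = GbarV.m') ∨
  (x = GbarV.m' ∧ (y = GbarV.a (Fin.last n) ∨ y = GbarV.b (Fin.last n))) ∨
  (∃ i : Fin n, x = GbarV.c i ∧
    (y = GbarV.a i.castSucc ∨ y = GbarV.b i.castSucc ∨ y = GbarV.a i.succ ∨ y = GbarV.b i.succ))

/-- The graph `Ḡₙ` (one row of the Aztec diamond dual graph capped on both sides by the
inverted-Y graph). -/
def GbarGraph (n : ℕ) : SimpleGraph (GbarV n) := SimpleGraph.fromRel (GbarRel n)


deriving instance DecidableEq for GbarV

def invSet {V : Type*} (G : SimpleGraph V) : Set (V → V) :=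
  {f | ∀ v, G.Adj v (f v) ∧ f (f v) = v}

lemma pm_mem {V : Type*} (G : SimpleGraph V) (f : V → V) (hf : f ∈ invSet G) :
    {e : Sym2 V | ∃ v, e = s(v, f v)} ∈
      {E' : Set (Sym2 V) | E' ⊆ G.edgeSet ∧ ∀ v : V, ∃! e ∈ E', v ∈ e} := by
  constructor
  · rintro e ⟨v, rfl⟩
    exact (hf v).1
  · intro v
    refine ⟨s(v, f v), ⟨⟨v, rfl⟩, by simp⟩, ?_⟩
    rintro e ⟨⟨w, rfl⟩, hv⟩
    rcases Sym2.mem_iff.1 hv with rfl | rfl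
    · rfl
    · rw [(hf w).2, Sym2.eq_swap]

lemma numPM_eq_invSet {V : Type*} (G : SimpleGraph V) :
    numPM G = (invSet G).ncard := by
  have himg : {E' : Set (Sym2 V) | E' ⊆ G.edgeSet ∧ ∀ v : V, ∃! e ∈ E', v ∈ e} =
      (fun f : V → V => {e : Sym2 V | ∃ v, e = s(v, f v)}) '' invSet G := by
    ext E'
    constructor
    · rintro ⟨hsub, huniq⟩
      -- define f via the unique edge
      have hch : ∀ v : V, ∃ w : V, s(v, w) ∈ E' ∧ ∀ e ∈ E', v ∈ e → e = s(v, w) := by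
        intro v
        obtain ⟨e, ⟨heE, hve⟩, hu⟩ := huniq v
        obtain ⟨w, hw⟩ : ∃ w, e = s(v, w) := by
          induction e with
          | h x y =>
            rcases Sym2.mem_iff.1 hve with rfl | rfl
            · exact ⟨y, rfl⟩
            · exact ⟨x, Sym2.eq_swap.symm⟩
        subst hw
        exact ⟨w, heE, fun e he hv => hu e ⟨he, hv⟩⟩
      choose f hf1 hf2 using hch
      have hadj : ∀ v, G.Adj v (f v) := fun v => G.mem_edgeSet.1 (hsub (hf1 v))
      have hinv : ∀ v, f (f v) = v := by
        intro v
        have h1 : s(f v, f (f v)) = s(v, f v) := by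
          have := hf2 (f v) _ (hf1 v) (by simp)
          exact this.symm
        have := Sym2.eq_iff.1 h1
        rcases this with ⟨h, _⟩ | ⟨h, h'⟩
        · exact absurd h (G.ne_of_adj (hadj v)).symm
        · exact h'
      refine ⟨f, fun v => ⟨hadj v, hinv v⟩, ?_⟩
      ext e
      constructor
      · rintro ⟨v, rfl⟩
        exact hf1 v
      · induction e with
        | h x y =>
          intro he
          exact ⟨x, hf2 x _ he (by simp)⟩
    · rintro ⟨f, hf, rfl⟩
      exact pm_mem G f hf
  rw [numPM, himg]
  apply Set.ncard_image_of_injOn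
  intro f hf g hg hEq
  funext v
  have h1 : s(v, f v) ∈ {e : Sym2 V | ∃ w, e = s(w, g w)} := by
    have : s(v, f v) ∈ {e : Sym2 V | ∃ w, e = s(w, f w)} := ⟨v, rfl⟩
    rwa [show {e : Sym2 V | ∃ w, e = s(w, f w)} = {e : Sym2 V | ∃ w, e = s(w, g w)} from hEq] at this
  obtain ⟨w, hw⟩ := h1
  rcases Sym2.eq_iff.1 hw with ⟨rfl, h2⟩ | ⟨h2, h3⟩
  · exact h2
  · -- v = g w, f v = w
    calc f v = g (g (f v)) := ((hg (f v)).2).symm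
    _ = g v := by rw [h3, ← h2]

namespace Gbar

variable {n : ℕ} (Da Db : Finset (Fin (n + 1)))

def SS : Set (GbarV n) :=
  {v | ¬ ((∃ j ∈ Da, v = GbarV.a j) ∨ (∃ j ∈ Db, v = GbarV.b j))}

@[simp] lemma a_mem_SS (j : Fin (n+1)) : GbarV.a j ∈ SS Da Db ↔ j ∉ Da := by
  simp [SS]
@[simp] lemma b_mem_SS (j : Fin (n+1)) : GbarV.b j ∈ SS Da Db ↔ j ∉ Db := by
  simp [SS]
@[simp] lemma c_mem_SS (i : Fin n) : GbarV.c i ∈ SS Da Db := by simp [SS]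
@[simp] lemma u_mem_SS : GbarV.u ∈ SS Da Db := by simp [SS]
@[simp] lemma m_mem_SS : GbarV.m ∈ SS Da Db := by simp [SS]
@[simp] lemma u'_mem_SS : GbarV.u' ∈ SS Da Db := by simp [SS]
@[simp] lemma m'_mem_SS : GbarV.m' ∈ SS Da Db := by simp [SS]

def sD (j : Fin (n+1)) : ℤ := (if j ∈ Da then 1 else 0) + (if j ∈ Db then 1 else 0) - 1

def PD (m : Fin (n+1)) : ℤ := ∑ x ∈ Finset.Iic m, sD Da Db x

lemma Iic_zero : Finset.Iic (0 : Fin (n+1)) = {0} := by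
  ext x
  simp only [Finset.mem_Iic, Finset.mem_singleton]
  exact Fin.le_zero_iff

lemma Iic_succ (i : Fin n) :
    Finset.Iic i.succ = insert i.succ (Finset.Iic i.castSucc) := by
  ext x
  simp [Finset.mem_Iic, Fin.le_def, Fin.ext_iff]
  omega

lemma PD_zero : PD Da Db 0 = sD Da Db 0 := by
  simp [PD, Iic_zero]

lemma PD_succ (i : Fin n) :
    PD Da Db i.succ = PD Da Db i.castSucc + sD Da Db i.succ := by
  rw [PD, Iic_succ, Finset.sum_insert, PD]
  · ring
  · simp [Finset.mem_Iic, Fin.le_def]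

end Gbar

namespace Gbar
variable {n : ℕ}

lemma adj_u (y : GbarV n) : (GbarGraph n).Adj GbarV.u y ↔ y = GbarV.m := by
  simp only [GbarGraph, SimpleGraph.fromRel_adj, GbarRel]; aesop

lemma adj_u' (y : GbarV n) : (GbarGraph n).Adj GbarV.u' y ↔ y = GbarV.m' := by
  simp only [GbarGraph, SimpleGraph.fromRel_adj, GbarRel]; aesop

lemma adj_m (y : GbarV n) :
    (GbarGraph n).Adj GbarV.m y ↔ y = GbarV.u ∨ y = GbarV.a 0 ∨ y = GbarV.b 0 := by
  simp only [GbarGraph, SimpleGraph.fromRel_adj, GbarRel]; aesop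

lemma adj_m' (y : GbarV n) :
    (GbarGraph n).Adj GbarV.m' y ↔
      y = GbarV.u' ∨ y = GbarV.a (Fin.last n) ∨ y = GbarV.b (Fin.last n) := by
  simp only [GbarGraph, SimpleGraph.fromRel_adj, GbarRel]; aesop

lemma adj_c (i : Fin n) (y : GbarV n) :
    (GbarGraph n).Adj (GbarV.c i) y ↔
      y = GbarV.a i.castSucc ∨ y = GbarV.b i.castSucc ∨
      y = GbarV.a i.succ ∨ y = GbarV.b i.succ := by
  simp only [GbarGraph, SimpleGraph.fromRel_adj, GbarRel]; aesop

lemma adj_a (j : Fin (n+1)) (y : GbarV n) :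
    (GbarGraph n).Adj (GbarV.a j) y ↔
      (j = 0 ∧ y = GbarV.m) ∨ (j = Fin.last n ∧ y = GbarV.m') ∨
      (∃ i : Fin n, (i.castSucc = j ∨ i.succ = j) ∧ y = GbarV.c i) := by
  simp only [GbarGraph, SimpleGraph.fromRel_adj, GbarRel]; aesop

lemma adj_b (j : Fin (n+1)) (y : GbarV n) :
    (GbarGraph n).Adj (GbarV.b j) y ↔
      (j = 0 ∧ y = GbarV.m) ∨ (j = Fin.last n ∧ y = GbarV.m') ∨
      (∃ i : Fin n, (i.castSucc = j ∨ i.succ = j) ∧ y = GbarV.c i) := by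
  simp only [GbarGraph, SimpleGraph.fromRel_adj, GbarRel]; aesop

end Gbar

namespace Gbar
variable {n : ℕ} (Da Db : Finset (Fin (n + 1)))

def PDp (j : Fin (n+1)) : ℤ := PD Da Db j - sD Da Db j

lemma PDp_zero : PDp Da Db (0 : Fin (n+1)) = 0 := by
  simp [PDp, PD_zero]

lemma PDp_succ (i : Fin n) : PDp Da Db i.succ = PD Da Db i.castSucc := by
  simp [PDp, PD_succ]

lemma exists_succ_eq {j : Fin (n+1)} (hj : j ≠ 0) : ∃ i : Fin n, i.succ = j := by
  have h0 : 0 < (j : ℕ) := by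
    rcases Nat.eq_zero_or_pos (j : ℕ) with h | h
    · exact absurd (Fin.ext h) hj
    · exact h
  exact ⟨⟨(j : ℕ) - 1, by omega⟩, by ext; simp [Fin.val_succ]; omega⟩

def CC : Prop :=
  (∀ m : Fin (n+1), PD Da Db m = 0 ∨ PD Da Db m = 1) ∧ PD Da Db (Fin.last n) = 1

lemma PDp_mem (hC : CC Da Db) (j : Fin (n+1)) : PDp Da Db j = 0 ∨ PDp Da Db j = 1 := by
  rcases eq_or_ne j 0 with rfl | hj
  · left; exact PDp_zero Da Db
  · obtain ⟨i, rfl⟩ := exists_succ_eq hj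
    rw [PDp_succ]
    exact hC.1 _

lemma sD_mem (j : Fin (n+1)) :
    sD Da Db j = -1 ∨ sD Da Db j = 0 ∨ sD Da Db j = 1 := by
  unfold sD; split_ifs <;> simp

lemma sD_eq_neg_one_iff (j : Fin (n+1)) :
    sD Da Db j = -1 ↔ j ∉ Da ∧ j ∉ Db := by
  unfold sD; split_ifs <;> simp_all <;> omega

lemma sD_eq_one_iff (j : Fin (n+1)) :
    sD Da Db j = 1 ↔ j ∈ Da ∧ j ∈ Db := by
  unfold sD; split_ifs <;> simp_all <;> omega

lemma PD_sub_PDp (j : Fin (n+1)) : PD Da Db j = PDp Da Db j + sD Da Db j := by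
  simp [PDp]

lemma PD_of_s_one (hC : CC Da Db) {j : Fin (n+1)} (h : sD Da Db j = 1) :
    PD Da Db j = 1 := by
  have h1 := PDp_mem Da Db hC j
  have h2 := hC.1 j
  have h3 := PD_sub_PDp Da Db j
  omega

lemma of_s_neg_one (hC : CC Da Db) {j : Fin (n+1)} (h : sD Da Db j = -1) :
    PD Da Db j = 0 ∧ PDp Da Db j = 1 ∧ j ≠ 0 ∧ j ≠ Fin.last n := by
  have h1 := PDp_mem Da Db hC j
  have h2 := hC.1 j
  have h3 := PD_sub_PDp Da Db j
  refine ⟨by omega, by omega, ?_, ?_⟩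
  · rintro rfl
    have := PDp_zero Da Db
    omega
  · rintro rfl
    have := hC.2
    omega

/-- target in column `j` for a `c`-vertex coming from the left (`fl = true`) or the
right (`fl = false`). -/
def colT (g : Fin (n+1) → Bool) (j : Fin (n+1)) (fl : Bool) : GbarV n :=
  if j ∈ Da then .b j else if j ∈ Db then .a j
  else if fl = g j then .a j else .b j

/-- partner of `c i`. -/
def pcD (g : Fin (n+1) → Bool) (i : Fin n) : GbarV n :=
  if PD Da Db i.castSucc = 1 then colT Da Db g i.succ true
  else colT Da Db g i.castSucc false

/-- the `c`-vertex to the right of column `j` (junk value `u` if there is none). -/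
def rightC (j : Fin (n+1)) : GbarV n :=
  if h : (j : ℕ) < n then .c ⟨j, h⟩ else .u

/-- the `c`-vertex to the left of column `j` (junk value `u` if there is none). -/
def leftC (j : Fin (n+1)) : GbarV n :=
  if h : 0 < (j : ℕ) then .c ⟨(j : ℕ) - 1, by omega⟩ else .u

def fLA (g : Fin (n+1) → Bool) (j : Fin (n+1)) : Bool :=
  if j ∉ Da ∧ j ∉ Db then g j else decide (PD Da Db j = 1)

def fLB (g : Fin (n+1) → Bool) (j : Fin (n+1)) : Bool :=
  if j ∉ Da ∧ j ∉ Db then !(g j) else decide (PD Da Db j = 1)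

/-- the candidate perfect matching (as an involution) determined by `g`. -/
def fD (g : Fin (n+1) → Bool) : GbarV n → GbarV n
  | .u => .m
  | .m => .u
  | .u' => .m'
  | .m' => .u'
  | .c i => pcD Da Db g i
  | .a j => if j ∈ Da then .a j else (if fLA Da Db g j then leftC j else rightC j)
  | .b j => if j ∈ Db then .b j else (if fLB Da Db g j then leftC j else rightC j)

def good (g : Fin (n+1) → Bool) : Prop := ∀ j, (j ∈ Da ∨ j ∈ Db) → g j = true

def FF : Set (GbarV n → GbarV n) :=
  {f0 | (∀ v ∈ SS Da Db, f0 v ∈ SS Da Db ∧ (GbarGraph n).Adj v (f0 v) ∧ f0 (f0 v) = v)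
      ∧ ∀ v ∉ SS Da Db, f0 v = v}

end Gbar

namespace Gbar
variable {n : ℕ} {Da Db : Finset (Fin (n + 1))} {g : Fin (n+1) → Bool}

lemma leftC_succ (i : Fin n) : leftC (i.succ) = GbarV.c i := by
  unfold leftC
  rw [dif_pos (by simp [Fin.val_succ])]
  exact congrArg GbarV.c (Fin.ext (by simp))

lemma rightC_castSucc (i : Fin n) : rightC (i.castSucc) = GbarV.c i := by
  unfold rightC
  rw [dif_pos (by simpa using i.isLt)]
  exact congrArg GbarV.c (Fin.ext (by simp))

lemma fD_a (j : Fin (n+1)) : fD Da Db g (.a j) =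
    if j ∈ Da then .a j else (if fLA Da Db g j then leftC j else rightC j) := rfl
lemma fD_b (j : Fin (n+1)) : fD Da Db g (.b j) =
    if j ∈ Db then .b j else (if fLB Da Db g j then leftC j else rightC j) := rfl
lemma fD_c (i : Fin n) : fD Da Db g (.c i) = pcD Da Db g i := rfl

lemma PD_castSucc_eq_PDp_succ (i : Fin n) : PD Da Db i.castSucc = PDp Da Db i.succ :=
  (PDp_succ Da Db i).symm

/-- `pcD` is a surviving neighbour of `c i` and `fD` sends it back to `c i`. -/
lemma pc_inv (hC : CC Da Db) (i : Fin n) :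
    pcD Da Db g i ∈ SS Da Db ∧ (GbarGraph n).Adj (GbarV.c i) (pcD Da Db g i) ∧
      fD Da Db g (pcD Da Db g i) = GbarV.c i := by
  by_cases hP : PD Da Db i.castSucc = 1
  · have hPy : PDp Da Db i.succ = 1 := by rw [← PD_castSucc_eq_PDp_succ]; exact hP
    have hPD := PD_sub_PDp Da Db i.succ
    have hsy : sD Da Db i.succ ≠ 1 := by
      intro h
      have h1 := PD_of_s_one Da Db hC h
      omega
    rw [pcD, if_pos hP, colT]
    by_cases hDa : i.succ ∈ Da
    · have hDb : i.succ ∉ Db := fun h => hsy ((sD_eq_one_iff Da Db _).2 ⟨hDa, h⟩)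
      have hs0 : sD Da Db i.succ = 0 := by simp [sD, hDa, hDb]
      have hPD1 : PD Da Db i.succ = 1 := by omega
      rw [if_pos hDa]
      refine ⟨by simp [hDb], (adj_c i _).2 (Or.inr (Or.inr (Or.inr rfl))), ?_⟩
      rw [fD_b, if_neg hDb]
      have hfLB : fLB Da Db g i.succ = true := by
        rw [fLB, if_neg (by tauto)]
        simp [hPD1]
      rw [if_pos hfLB, leftC_succ]
    · by_cases hDb : i.succ ∈ Db
      · have hs0 : sD Da Db i.succ = 0 := by simp [sD, hDa, hDb]
        have hPD1 : PD Da Db i.succ = 1 := by omega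
        rw [if_neg hDa, if_pos hDb]
        refine ⟨by simp [hDa], (adj_c i _).2 (Or.inr (Or.inr (Or.inl rfl))), ?_⟩
        rw [fD_a, if_neg hDa]
        have hfLA : fLA Da Db g i.succ = true := by
          rw [fLA, if_neg (by tauto)]
          simp [hPD1]
        rw [if_pos hfLA, leftC_succ]
      · rw [if_neg hDa, if_neg hDb]
        by_cases hg : g i.succ = true
        · rw [if_pos (by simp [hg])]
          refine ⟨by simp [hDa], (adj_c i _).2 (Or.inr (Or.inr (Or.inl rfl))), ?_⟩
          rw [fD_a, if_neg hDa]
          have hfLA : fLA Da Db g i.succ = true := by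
            rw [fLA, if_pos ⟨hDa, hDb⟩]
            exact hg
          rw [if_pos hfLA, leftC_succ]
        · have hg' : g i.succ = false := by simpa using hg
          rw [if_neg (by simp [hg'])]
          refine ⟨by simp [hDb], (adj_c i _).2 (Or.inr (Or.inr (Or.inr rfl))), ?_⟩
          rw [fD_b, if_neg hDb]
          have hfLB : fLB Da Db g i.succ = true := by
            rw [fLB, if_pos ⟨hDa, hDb⟩, hg']
            rfl
          rw [if_pos hfLB, leftC_succ]
  · have hP0 : PD Da Db i.castSucc = 0 := (hC.1 _).resolve_right hP
    have hsx : sD Da Db i.castSucc ≠ 1 := fun h => hP (PD_of_s_one Da Db hC h)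
    rw [pcD, if_neg hP, colT]
    by_cases hDa : i.castSucc ∈ Da
    · have hDb : i.castSucc ∉ Db := fun h => hsx ((sD_eq_one_iff Da Db _).2 ⟨hDa, h⟩)
      rw [if_pos hDa]
      refine ⟨by simp [hDb], (adj_c i _).2 (Or.inr (Or.inl rfl)), ?_⟩
      rw [fD_b, if_neg hDb]
      have hfLB : fLB Da Db g i.castSucc = false := by
        rw [fLB, if_neg (by tauto)]
        simp [hP]
      rw [if_neg (by rw [hfLB]; simp), rightC_castSucc]
    · by_cases hDb : i.castSucc ∈ Db
      · rw [if_neg hDa, if_pos hDb]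
        refine ⟨by simp [hDa], (adj_c i _).2 (Or.inl rfl), ?_⟩
        rw [fD_a, if_neg hDa]
        have hfLA : fLA Da Db g i.castSucc = false := by
          rw [fLA, if_neg (by tauto)]
          simp [hP]
        rw [if_neg (by rw [hfLA]; simp), rightC_castSucc]
      · rw [if_neg hDa, if_neg hDb]
        by_cases hg : g i.castSucc = true
        · rw [if_neg (by simp [hg])]
          refine ⟨by simp [hDb], (adj_c i _).2 (Or.inr (Or.inl rfl)), ?_⟩
          rw [fD_b, if_neg hDb]
          have hfLB : fLB Da Db g i.castSucc = false := by
            rw [fLB, if_pos ⟨hDa, hDb⟩, hg]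
            rfl
          rw [if_neg (by rw [hfLB]; simp), rightC_castSucc]
        · have hg' : g i.castSucc = false := by simpa using hg
          rw [if_pos (by simp [hg'])]
          refine ⟨by simp [hDa], (adj_c i _).2 (Or.inl rfl), ?_⟩
          rw [fD_a, if_neg hDa]
          have hfLA : fLA Da Db g i.castSucc = false := by
            rw [fLA, if_pos ⟨hDa, hDb⟩]
            exact hg'
          rw [if_neg (by rw [hfLA]; simp), rightC_castSucc]

end Gbar


namespace Gbar
variable {n : ℕ} {Da Db : Finset (Fin (n + 1))} {g : Fin (n+1) → Bool}

lemma a_inv (hC : CC Da Db) {j : Fin (n+1)} (hDa : j ∉ Da) :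
    ∃ i : Fin n, fD Da Db g (.a j) = GbarV.c i ∧ (i.castSucc = j ∨ i.succ = j) ∧
      pcD Da Db g i = GbarV.a j := by
  by_cases hDb : j ∈ Db
  · have hs0 : sD Da Db j = 0 := by simp [sD, hDa, hDb]
    by_cases hP : PD Da Db j = 1
    · have hj0 : j ≠ 0 := by
        rintro rfl
        rw [PD_zero] at hP
        omega
      obtain ⟨i, rfl⟩ := exists_succ_eq hj0
      have hPx : PD Da Db i.castSucc = 1 := by
        rw [PD_castSucc_eq_PDp_succ]
        have := PD_sub_PDp Da Db i.succ
        omega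
      refine ⟨i, ?_, Or.inr rfl, ?_⟩
      · rw [fD_a, if_neg hDa]
        have hfLA : fLA Da Db g i.succ = true := by
          rw [fLA, if_neg (by tauto)]
          simp [hP]
        rw [if_pos hfLA, leftC_succ]
      · rw [pcD, if_pos hPx, colT, if_neg hDa, if_pos hDb]
    · have hP0 : PD Da Db j = 0 := (hC.1 j).resolve_right hP
      have hjl : j ≠ Fin.last n := by
        rintro rfl
        have := hC.2
        omega
      have hlt : (j : ℕ) < n := by
        have h1 := j.isLt
        have h2 : (j : ℕ) ≠ n := fun h => hjl (Fin.ext_iff.2 (by simp [h]))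
        omega
      refine ⟨⟨(j : ℕ), hlt⟩, ?_, Or.inl (Fin.ext_iff.2 rfl), ?_⟩
      · rw [fD_a, if_neg hDa]
        have hfLA : fLA Da Db g j = false := by
          rw [fLA, if_neg (by tauto)]
          simp [hP]
        rw [if_neg (by rw [hfLA]; simp)]
        unfold rightC
        rw [dif_pos hlt]
      · have hcast : (⟨(j : ℕ), hlt⟩ : Fin n).castSucc = j := Fin.ext_iff.2 rfl
        rw [pcD, hcast, if_neg hP, colT, if_neg hDa, if_pos hDb]
  · have hs := (sD_eq_neg_one_iff Da Db j).2 ⟨hDa, hDb⟩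
    obtain ⟨hPj, hPpj, hj0, hjl⟩ := of_s_neg_one Da Db hC hs
    by_cases hg : g j = true
    · obtain ⟨i, rfl⟩ := exists_succ_eq hj0
      have hPx : PD Da Db i.castSucc = 1 := by
        rw [PD_castSucc_eq_PDp_succ]
        exact hPpj
      refine ⟨i, ?_, Or.inr rfl, ?_⟩
      · rw [fD_a, if_neg hDa]
        have hfLA : fLA Da Db g i.succ = true := by
          rw [fLA, if_pos ⟨hDa, hDb⟩]
          exact hg
        rw [if_pos hfLA, leftC_succ]
      · rw [pcD, if_pos hPx, colT, if_neg hDa, if_neg hDb, if_pos (by simp [hg])]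
    · have hg' : g j = false := by simpa using hg
      have hlt : (j : ℕ) < n := by
        have h1 := j.isLt
        have h2 : (j : ℕ) ≠ n := fun h => hjl (Fin.ext_iff.2 (by simp [h]))
        omega
      refine ⟨⟨(j : ℕ), hlt⟩, ?_, Or.inl (Fin.ext_iff.2 rfl), ?_⟩
      · rw [fD_a, if_neg hDa]
        have hfLA : fLA Da Db g j = false := by
          rw [fLA, if_pos ⟨hDa, hDb⟩]
          exact hg'
        rw [if_neg (by rw [hfLA]; simp)]
        unfold rightC
        rw [dif_pos hlt]
      · have hcast : (⟨(j : ℕ), hlt⟩ : Fin n).castSucc = j := Fin.ext_iff.2 rfl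
        rw [pcD, hcast, if_neg (by omega), colT, if_neg hDa, if_neg hDb,
          if_pos (by simp [hg'])]

lemma b_inv (hC : CC Da Db) {j : Fin (n+1)} (hDb : j ∉ Db) :
    ∃ i : Fin n, fD Da Db g (.b j) = GbarV.c i ∧ (i.castSucc = j ∨ i.succ = j) ∧
      pcD Da Db g i = GbarV.b j := by
  by_cases hDa : j ∈ Da
  · have hs0 : sD Da Db j = 0 := by simp [sD, hDa, hDb]
    by_cases hP : PD Da Db j = 1
    · have hj0 : j ≠ 0 := by
        rintro rfl
        rw [PD_zero] at hP
        omega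
      obtain ⟨i, rfl⟩ := exists_succ_eq hj0
      have hPx : PD Da Db i.castSucc = 1 := by
        rw [PD_castSucc_eq_PDp_succ]
        have := PD_sub_PDp Da Db i.succ
        omega
      refine ⟨i, ?_, Or.inr rfl, ?_⟩
      · rw [fD_b, if_neg hDb]
        have hfLB : fLB Da Db g i.succ = true := by
          rw [fLB, if_neg (by tauto)]
          simp [hP]
        rw [if_pos hfLB, leftC_succ]
      · rw [pcD, if_pos hPx, colT, if_pos hDa]
    · have hP0 : PD Da Db j = 0 := (hC.1 j).resolve_right hP
      have hjl : j ≠ Fin.last n := by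
        rintro rfl
        have := hC.2
        omega
      have hlt : (j : ℕ) < n := by
        have h1 := j.isLt
        have h2 : (j : ℕ) ≠ n := fun h => hjl (Fin.ext_iff.2 (by simp [h]))
        omega
      refine ⟨⟨(j : ℕ), hlt⟩, ?_, Or.inl (Fin.ext_iff.2 rfl), ?_⟩
      · rw [fD_b, if_neg hDb]
        have hfLB : fLB Da Db g j = false := by
          rw [fLB, if_neg (by tauto)]
          simp [hP]
        rw [if_neg (by rw [hfLB]; simp)]
        unfold rightC
        rw [dif_pos hlt]
      · have hcast : (⟨(j : ℕ), hlt⟩ : Fin n).castSucc = j := Fin.ext_iff.2 rfl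
        rw [pcD, hcast, if_neg hP, colT, if_pos hDa]
  · have hs := (sD_eq_neg_one_iff Da Db j).2 ⟨hDa, hDb⟩
    obtain ⟨hPj, hPpj, hj0, hjl⟩ := of_s_neg_one Da Db hC hs
    by_cases hg : g j = true
    · have hlt : (j : ℕ) < n := by
        have h1 := j.isLt
        have h2 : (j : ℕ) ≠ n := fun h => hjl (Fin.ext_iff.2 (by simp [h]))
        omega
      refine ⟨⟨(j : ℕ), hlt⟩, ?_, Or.inl (Fin.ext_iff.2 rfl), ?_⟩
      · rw [fD_b, if_neg hDb]
        have hfLB : fLB Da Db g j = false := by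
          rw [fLB, if_pos ⟨hDa, hDb⟩, hg]
          rfl
        rw [if_neg (by rw [hfLB]; simp)]
        unfold rightC
        rw [dif_pos hlt]
      · have hcast : (⟨(j : ℕ), hlt⟩ : Fin n).castSucc = j := Fin.ext_iff.2 rfl
        rw [pcD, hcast, if_neg (by omega), colT, if_neg hDa, if_neg hDb,
          if_neg (by simp [hg])]
    · have hg' : g j = false := by simpa using hg
      obtain ⟨i, rfl⟩ := exists_succ_eq hj0
      have hPx : PD Da Db i.castSucc = 1 := by
        rw [PD_castSucc_eq_PDp_succ]
        exact hPpj
      refine ⟨i, ?_, Or.inr rfl, ?_⟩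
      · rw [fD_b, if_neg hDb]
        have hfLB : fLB Da Db g i.succ = true := by
          rw [fLB, if_pos ⟨hDa, hDb⟩, hg']
          rfl
        rw [if_pos hfLB, leftC_succ]
      · rw [pcD, if_pos hPx, colT, if_neg hDa, if_neg hDb, if_neg (by simp [hg'])]

end Gbar

namespace Gbar
variable {n : ℕ} {Da Db : Finset (Fin (n + 1))} {g : Fin (n+1) → Bool}
  {f0 : GbarV n → GbarV n}

lemma mem_FF (hC : CC Da Db) : fD Da Db g ∈ FF Da Db := by
  constructor
  · intro v hv
    match v with
    | .u => exact ⟨m_mem_SS Da Db, (adj_u _).2 rfl, rfl⟩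
    | .m => exact ⟨u_mem_SS Da Db, (adj_m _).2 (Or.inl rfl), rfl⟩
    | .u' => exact ⟨m'_mem_SS Da Db, (adj_u' _).2 rfl, rfl⟩
    | .m' => exact ⟨u'_mem_SS Da Db, (adj_m' _).2 (Or.inl rfl), rfl⟩
    | .c i =>
      obtain ⟨h1, h2, h3⟩ := pc_inv (g := g) hC i
      exact ⟨h1, h2, h3⟩
    | .a j =>
      have hDa : j ∉ Da := by simpa using hv
      obtain ⟨i, hf, hadj, hpc⟩ := a_inv (g := g) hC hDa
      refine ⟨by rw [hf]; simp, ?_, ?_⟩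
      · rw [hf]
        exact (adj_a j _).2 (Or.inr (Or.inr ⟨i, hadj, rfl⟩))
      · rw [hf, fD_c, hpc]
    | .b j =>
      have hDb : j ∉ Db := by simpa using hv
      obtain ⟨i, hf, hadj, hpc⟩ := b_inv (g := g) hC hDb
      refine ⟨by rw [hf]; simp, ?_, ?_⟩
      · rw [hf]
        exact (adj_b j _).2 (Or.inr (Or.inr ⟨i, hadj, rfl⟩))
      · rw [hf, fD_c, hpc]
  · intro v hv
    match v with
    | .u => exact absurd (u_mem_SS Da Db) hv
    | .m => exact absurd (m_mem_SS Da Db) hv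
    | .u' => exact absurd (u'_mem_SS Da Db) hv
    | .m' => exact absurd (m'_mem_SS Da Db) hv
    | .c i => exact absurd (c_mem_SS Da Db i) hv
    | .a j =>
      have hDa : j ∈ Da := by simpa using hv
      rw [fD_a, if_pos hDa]
    | .b j =>
      have hDb : j ∈ Db := by simpa using hv
      rw [fD_b, if_pos hDb]

lemma FF_u (hf : f0 ∈ FF Da Db) : f0 .u = .m :=
  (adj_u _).1 (hf.1 .u (by simp)).2.1

lemma FF_m (hf : f0 ∈ FF Da Db) : f0 .m = .u := by
  conv_lhs => rw [← FF_u hf]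
  exact (hf.1 .u (by simp)).2.2

lemma FF_u' (hf : f0 ∈ FF Da Db) : f0 .u' = .m' :=
  (adj_u' _).1 (hf.1 .u' (by simp)).2.1

lemma FF_m' (hf : f0 ∈ FF Da Db) : f0 .m' = .u' := by
  conv_lhs => rw [← FF_u' hf]
  exact (hf.1 .u' (by simp)).2.2

lemma FF_inj (hf : f0 ∈ FF Da Db) {v w : GbarV n} (hv : v ∈ SS Da Db)
    (hw : w ∈ SS Da Db) (h : f0 v = f0 w) : v = w := by
  have h1 := (hf.1 v hv).2.2
  have h2 := (hf.1 w hw).2.2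
  rw [← h1, ← h2, h]

lemma FF_c (hf : f0 ∈ FF Da Db) (i : Fin n) :
    f0 (.c i) = .a i.castSucc ∨ f0 (.c i) = .b i.castSucc ∨
      f0 (.c i) = .a i.succ ∨ f0 (.c i) = .b i.succ :=
  (adj_c _ _).1 (hf.1 _ (by simp)).2.1

lemma FF_a (hf : f0 ∈ FF Da Db) {j : Fin (n+1)} (hDa : j ∉ Da) :
    ∃ i : Fin n, (i.castSucc = j ∨ i.succ = j) ∧ f0 (.a j) = .c i ∧
      f0 (.c i) = .a j := by
  have hmem : GbarV.a j ∈ SS Da Db := by simp [hDa]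
  have hadj := (hf.1 (.a j) hmem).2.1
  have hinv := (hf.1 (.a j) hmem).2.2
  rcases (adj_a _ _).1 hadj with ⟨h0, hm⟩ | ⟨hl, hm'⟩ | ⟨i, hi, hc⟩
  · exfalso
    rw [hm, FF_m hf] at hinv
    exact absurd hinv (by simp)
  · exfalso
    rw [hm', FF_m' hf] at hinv
    exact absurd hinv (by simp)
  · refine ⟨i, hi, hc, ?_⟩
    rw [← hc]
    exact hinv

lemma FF_b (hf : f0 ∈ FF Da Db) {j : Fin (n+1)} (hDb : j ∉ Db) :
    ∃ i : Fin n, (i.castSucc = j ∨ i.succ = j) ∧ f0 (.b j) = .c i ∧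
      f0 (.c i) = .b j := by
  have hmem : GbarV.b j ∈ SS Da Db := by simp [hDb]
  have hadj := (hf.1 (.b j) hmem).2.1
  have hinv := (hf.1 (.b j) hmem).2.2
  rcases (adj_b _ _).1 hadj with ⟨h0, hm⟩ | ⟨hl, hm'⟩ | ⟨i, hi, hc⟩
  · exfalso
    rw [hm, FF_m hf] at hinv
    exact absurd hinv (by simp)
  · exfalso
    rw [hm', FF_m' hf] at hinv
    exact absurd hinv (by simp)
  · refine ⟨i, hi, hc, ?_⟩
    rw [← hc]
    exact hinv

end Gbar

namespace Gbar
variable {n : ℕ} {Da Db : Finset (Fin (n + 1))} {f0 : GbarV n → GbarV n}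

lemma FF_claim (hf : f0 ∈ FF Da Db) :
    ∀ i : Fin n,
      (PD Da Db i.castSucc = 0 ∨ PD Da Db i.castSucc = 1) ∧
      (PD Da Db i.castSucc = 1 ↔
        (f0 (.c i) = .a i.succ ∨ f0 (.c i) = .b i.succ)) := by
  intro i
  obtain ⟨k, hk⟩ := i
  induction k with
  | zero =>
    have hcast : ((⟨0, hk⟩ : Fin n)).castSucc = 0 := Fin.ext_iff.2 rfl
    rw [hcast, PD_zero]
    have hres : ∀ i : Fin n, (i.castSucc = 0 ∨ i.succ = 0) → i = ⟨0, hk⟩ := by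
      intro i hi
      rcases hi with h | h
      · exact Fin.ext_iff.2 (by simpa [Fin.ext_iff] using h)
      · exfalso
        have := Fin.ext_iff.1 h
        simp [Fin.val_succ] at this
    by_cases hDa : (0 : Fin (n+1)) ∈ Da
    · by_cases hDb : (0 : Fin (n+1)) ∈ Db
      · have hs : sD Da Db 0 = 1 := by simp [sD, hDa, hDb]
        refine ⟨Or.inr hs, fun _ => ?_, fun _ => hs⟩
        rcases FF_c hf ⟨0, hk⟩ with h | h | h | h
        · exfalso
          have hm := (hf.1 (.c ⟨0, hk⟩) (by simp)).1
          rw [h, hcast] at hm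
          simp [hDa] at hm
        · exfalso
          have hm := (hf.1 (.c ⟨0, hk⟩) (by simp)).1
          rw [h, hcast] at hm
          simp [hDb] at hm
        · exact Or.inl h
        · exact Or.inr h
      · have hs : sD Da Db 0 = 0 := by simp [sD, hDa, hDb]
        obtain ⟨ib, hib, _, hcb⟩ := FF_b hf hDb
        rw [hres ib hib] at hcb
        refine ⟨Or.inl hs, fun h1 => absurd h1 (by omega), fun hdir => ?_⟩
        exfalso
        rcases hdir with h | h <;> rw [hcb] at h
        · exact absurd h (by simp)
        · have := h
          simp [Fin.ext_iff, Fin.val_succ] at this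
    · by_cases hDb : (0 : Fin (n+1)) ∈ Db
      · have hs : sD Da Db 0 = 0 := by simp [sD, hDa, hDb]
        obtain ⟨ia, hia, _, hca⟩ := FF_a hf hDa
        rw [hres ia hia] at hca
        refine ⟨Or.inl hs, fun h1 => absurd h1 (by omega), fun hdir => ?_⟩
        exfalso
        rcases hdir with h | h <;> rw [hca] at h
        · have := h
          simp [Fin.ext_iff, Fin.val_succ] at this
        · exact absurd h (by simp)
      · exfalso
        obtain ⟨ia, hia, _, hca⟩ := FF_a hf hDa
        obtain ⟨ib, hib, _, hcb⟩ := FF_b hf hDb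
        rw [hres ia hia] at hca
        rw [hres ib hib] at hcb
        rw [hca] at hcb
        exact absurd hcb (by simp)
  | succ k IH =>
    have hkn : k < n := by omega
    obtain ⟨IH1, IH2⟩ := IH hkn
    have hps : (⟨k, hkn⟩ : Fin n).succ = (⟨k+1, hk⟩ : Fin n).castSucc :=
      Fin.ext_iff.2 rfl
    have hPD := PD_succ Da Db ⟨k, hkn⟩
    rw [hps] at hPD IH2
    have hres : ∀ i : Fin n,
        (i.castSucc = (⟨k+1, hk⟩ : Fin n).castSucc ∨
          i.succ = (⟨k+1, hk⟩ : Fin n).castSucc) →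
        i = ⟨k, hkn⟩ ∨ i = ⟨k+1, hk⟩ := by
      intro i hi
      have hval : (i : ℕ) = k ∨ (i : ℕ) = k + 1 := by
        rcases hi with h | h
        · have := Fin.ext_iff.1 h
          simp only [Fin.coe_castSucc] at this
          omega
        · have := Fin.ext_iff.1 h
          simp only [Fin.val_succ, Fin.coe_castSucc] at this
          omega
      rcases hval with h | h
      · exact Or.inl (Fin.ext_iff.2 h)
      · exact Or.inr (Fin.ext_iff.2 h)
    have hip_ne : (⟨k, hkn⟩ : Fin n) ≠ ⟨k+1, hk⟩ := by
      simp [Fin.ext_iff]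
    by_cases hDa : (⟨k+1, hk⟩ : Fin n).castSucc ∈ Da
    · by_cases hDb : (⟨k+1, hk⟩ : Fin n).castSucc ∈ Db
      · -- s = 1 : both deleted
        have hs : sD Da Db ((⟨k+1, hk⟩ : Fin n).castSucc) = 1 := by
          unfold sD
          rw [if_pos hDa, if_pos hDb]
          norm_num
        have hndirL : ¬(f0 (.c ⟨k, hkn⟩) = .a ((⟨k+1, hk⟩ : Fin n).castSucc) ∨
            f0 (.c ⟨k, hkn⟩) = .b ((⟨k+1, hk⟩ : Fin n).castSucc)) := by
          rintro (h | h)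
          · have hm := (hf.1 (.c ⟨k, hkn⟩) (by simp)).1
            rw [h] at hm
            simp at hm
            exact hm hDa
          · have hm := (hf.1 (.c ⟨k, hkn⟩) (by simp)).1
            rw [h] at hm
            simp at hm
            exact hm hDb
        have hPDp0 : PD Da Db ((⟨k, hkn⟩ : Fin n).castSucc) = 0 :=
          IH1.resolve_right (fun h => hndirL (IH2.1 h))
        have hPDj : PD Da Db ((⟨k+1, hk⟩ : Fin n).castSucc) = 1 := by omega
        refine ⟨Or.inr hPDj, fun _ => ?_, fun _ => hPDj⟩
        rcases FF_c hf ⟨k+1, hk⟩ with h | h | h | h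
        · exfalso
          have hm := (hf.1 (.c ⟨k+1, hk⟩) (by simp)).1
          rw [h] at hm
          simp at hm
          exact hm hDa
        · exfalso
          have hm := (hf.1 (.c ⟨k+1, hk⟩) (by simp)).1
          rw [h] at hm
          simp at hm
          exact hm hDb
        · exact Or.inl h
        · exact Or.inr h
      · -- survivor b
        have hs : sD Da Db ((⟨k+1, hk⟩ : Fin n).castSucc) = 0 := by
          unfold sD
          rw [if_pos hDa, if_neg hDb]
          norm_num
        obtain ⟨ib, hib, _, hcb⟩ := FF_b hf hDb
        rcases hres ib hib with rfl | rfl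
        · -- matched by left c
          have hPDp1 : PD Da Db ((⟨k, hkn⟩ : Fin n).castSucc) = 1 :=
            IH2.2 (Or.inr hcb)
          have hPDj : PD Da Db ((⟨k+1, hk⟩ : Fin n).castSucc) = 1 := by omega
          refine ⟨Or.inr hPDj, fun _ => ?_, fun _ => hPDj⟩
          rcases FF_c hf ⟨k+1, hk⟩ with h | h | h | h
          · exfalso
            have hm := (hf.1 (.c ⟨k+1, hk⟩) (by simp)).1
            rw [h] at hm
            simp at hm
            exact hm hDa
          · exfalso
            rw [← hcb] at h
            have := FF_inj hf (c_mem_SS Da Db _) (c_mem_SS Da Db _) h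
            simp [Fin.ext_iff] at this
          · exact Or.inl h
          · exact Or.inr h
        · -- matched by current c
          have hndirL : ¬(f0 (.c ⟨k, hkn⟩) = .a ((⟨k+1, hk⟩ : Fin n).castSucc) ∨
              f0 (.c ⟨k, hkn⟩) = .b ((⟨k+1, hk⟩ : Fin n).castSucc)) := by
            rintro (h | h)
            · have hm := (hf.1 (.c ⟨k, hkn⟩) (by simp)).1
              rw [h] at hm
              simp at hm
              exact hm hDa
            · rw [← hcb] at h
              have := FF_inj hf (c_mem_SS Da Db _) (c_mem_SS Da Db _) h
              simp [Fin.ext_iff] at this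
          have hPDp0 : PD Da Db ((⟨k, hkn⟩ : Fin n).castSucc) = 0 :=
            IH1.resolve_right (fun h => hndirL (IH2.1 h))
          have hPDj : PD Da Db ((⟨k+1, hk⟩ : Fin n).castSucc) = 0 := by omega
          refine ⟨Or.inl hPDj, fun h1 => absurd h1 (by omega), fun hdir => ?_⟩
          exfalso
          rcases hdir with h | h <;> rw [hcb] at h
          · exact absurd h (by simp)
          · have := h
            simp [Fin.ext_iff, Fin.val_succ] at this
    · by_cases hDb : (⟨k+1, hk⟩ : Fin n).castSucc ∈ Db
      · -- survivor a
        have hs : sD Da Db ((⟨k+1, hk⟩ : Fin n).castSucc) = 0 := by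
          unfold sD
          rw [if_neg hDa, if_pos hDb]
          norm_num
        obtain ⟨ia, hia, _, hca⟩ := FF_a hf hDa
        rcases hres ia hia with rfl | rfl
        · have hPDp1 : PD Da Db ((⟨k, hkn⟩ : Fin n).castSucc) = 1 :=
            IH2.2 (Or.inl hca)
          have hPDj : PD Da Db ((⟨k+1, hk⟩ : Fin n).castSucc) = 1 := by omega
          refine ⟨Or.inr hPDj, fun _ => ?_, fun _ => hPDj⟩
          rcases FF_c hf ⟨k+1, hk⟩ with h | h | h | h
          · exfalso
            rw [← hca] at h
            have := FF_inj hf (c_mem_SS Da Db _) (c_mem_SS Da Db _) h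
            simp [Fin.ext_iff] at this
          · exfalso
            have hm := (hf.1 (.c ⟨k+1, hk⟩) (by simp)).1
            rw [h] at hm
            simp at hm
            exact hm hDb
          · exact Or.inl h
          · exact Or.inr h
        · have hndirL : ¬(f0 (.c ⟨k, hkn⟩) = .a ((⟨k+1, hk⟩ : Fin n).castSucc) ∨
              f0 (.c ⟨k, hkn⟩) = .b ((⟨k+1, hk⟩ : Fin n).castSucc)) := by
            rintro (h | h)
            · rw [← hca] at h
              have := FF_inj hf (c_mem_SS Da Db _) (c_mem_SS Da Db _) h
              simp [Fin.ext_iff] at this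
            · have hm := (hf.1 (.c ⟨k, hkn⟩) (by simp)).1
              rw [h] at hm
              simp at hm
              exact hm hDb
          have hPDp0 : PD Da Db ((⟨k, hkn⟩ : Fin n).castSucc) = 0 :=
            IH1.resolve_right (fun h => hndirL (IH2.1 h))
          have hPDj : PD Da Db ((⟨k+1, hk⟩ : Fin n).castSucc) = 0 := by omega
          refine ⟨Or.inl hPDj, fun h1 => absurd h1 (by omega), fun hdir => ?_⟩
          exfalso
          rcases hdir with h | h <;> rw [hca] at h
          · have := h
            simp [Fin.ext_iff, Fin.val_succ] at this
          · exact absurd h (by simp)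
      · -- both survive : s = -1
        have hs : sD Da Db ((⟨k+1, hk⟩ : Fin n).castSucc) = -1 :=
          (sD_eq_neg_one_iff Da Db _).2 ⟨hDa, hDb⟩
        obtain ⟨ia, hia, _, hca⟩ := FF_a hf hDa
        obtain ⟨ib, hib, _, hcb⟩ := FF_b hf hDb
        have hab : ia ≠ ib := by
          rintro rfl
          rw [hca] at hcb
          exact absurd hcb (by simp)
        have hboth : (f0 (.c ⟨k, hkn⟩) = .a ((⟨k+1, hk⟩ : Fin n).castSucc) ∨
              f0 (.c ⟨k, hkn⟩) = .b ((⟨k+1, hk⟩ : Fin n).castSucc)) ∧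
            (f0 (.c ⟨k+1, hk⟩) = .a ((⟨k+1, hk⟩ : Fin n).castSucc) ∨
              f0 (.c ⟨k+1, hk⟩) = .b ((⟨k+1, hk⟩ : Fin n).castSucc)) := by
          rcases hres ia hia with rfl | rfl <;> rcases hres ib hib with rfl | rfl
          · exact absurd rfl hab
          · exact ⟨Or.inl hca, Or.inr hcb⟩
          · exact ⟨Or.inr hcb, Or.inl hca⟩
          · exact absurd rfl hab
        have hPDp1 : PD Da Db ((⟨k, hkn⟩ : Fin n).castSucc) = 1 := IH2.2 hboth.1
        have hPDj : PD Da Db ((⟨k+1, hk⟩ : Fin n).castSucc) = 0 := by omega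
        refine ⟨Or.inl hPDj, fun h1 => absurd h1 (by omega), fun hdir => ?_⟩
        exfalso
        rcases hboth.2 with h1 | h1 <;> rcases hdir with h2 | h2 <;>
            rw [h1] at h2 <;> have := h2 <;>
          simp [Fin.ext_iff, Fin.val_succ] at this

end Gbar

namespace Gbar
variable {n : ℕ} {Da Db : Finset (Fin (n + 1))} {f0 : GbarV n → GbarV n}

lemma FF_last (hn : 1 ≤ n) (hf : f0 ∈ FF Da Db) : PD Da Db (Fin.last n) = 1 := by
  have hkn : n - 1 < n := by omega
  obtain ⟨IH1, IH2⟩ := FF_claim hf ⟨n-1, hkn⟩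
  have hps : (⟨n-1, hkn⟩ : Fin n).succ = Fin.last n :=
    Fin.ext_iff.2 (by simp [Fin.val_succ, Fin.val_last]; omega)
  have hPD := PD_succ Da Db ⟨n-1, hkn⟩
  rw [hps] at hPD IH2
  have hres : ∀ i : Fin n, (i.castSucc = Fin.last n ∨ i.succ = Fin.last n) →
      i = ⟨n-1, hkn⟩ := by
    intro i hi
    rcases hi with h | h
    · exfalso
      have := Fin.ext_iff.1 h
      simp only [Fin.coe_castSucc, Fin.val_last] at this
      have := i.isLt
      omega
    · have := Fin.ext_iff.1 h
      simp only [Fin.val_succ, Fin.val_last] at this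
      exact Fin.ext_iff.2 (show (i : ℕ) = n - 1 by omega)
  by_cases hDa : Fin.last n ∈ Da
  · by_cases hDb : Fin.last n ∈ Db
    · have hs : sD Da Db (Fin.last n) = 1 := by
        unfold sD
        rw [if_pos hDa, if_pos hDb]
        norm_num
      have hndirL : ¬(f0 (.c ⟨n-1, hkn⟩) = .a (Fin.last n) ∨
          f0 (.c ⟨n-1, hkn⟩) = .b (Fin.last n)) := by
        rintro (h | h)
        · have hm := (hf.1 (.c ⟨n-1, hkn⟩) (by simp)).1
          rw [h] at hm
          simp at hm
          exact hm hDa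
        · have hm := (hf.1 (.c ⟨n-1, hkn⟩) (by simp)).1
          rw [h] at hm
          simp at hm
          exact hm hDb
      have hPDp0 : PD Da Db ((⟨n-1, hkn⟩ : Fin n).castSucc) = 0 :=
        IH1.resolve_right (fun h => hndirL (IH2.1 h))
      omega
    · have hs : sD Da Db (Fin.last n) = 0 := by
        unfold sD
        rw [if_pos hDa, if_neg hDb]
        norm_num
      obtain ⟨ib, hib, _, hcb⟩ := FF_b hf hDb
      rw [hres ib hib] at hcb
      have hPDp1 : PD Da Db ((⟨n-1, hkn⟩ : Fin n).castSucc) = 1 :=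
        IH2.2 (Or.inr hcb)
      omega
  · by_cases hDb : Fin.last n ∈ Db
    · have hs : sD Da Db (Fin.last n) = 0 := by
        unfold sD
        rw [if_neg hDa, if_pos hDb]
        norm_num
      obtain ⟨ia, hia, _, hca⟩ := FF_a hf hDa
      rw [hres ia hia] at hca
      have hPDp1 : PD Da Db ((⟨n-1, hkn⟩ : Fin n).castSucc) = 1 :=
        IH2.2 (Or.inl hca)
      omega
    · exfalso
      obtain ⟨ia, hia, _, hca⟩ := FF_a hf hDa
      obtain ⟨ib, hib, _, hcb⟩ := FF_b hf hDb
      rw [hres ia hia] at hca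
      rw [hres ib hib] at hcb
      rw [hca] at hcb
      exact absurd hcb (by simp)

lemma FF_CC (hn : 1 ≤ n) (hf : f0 ∈ FF Da Db) : CC Da Db := by
  constructor
  · intro m
    by_cases hm : (m : ℕ) < n
    · have h := (FF_claim hf ⟨(m : ℕ), hm⟩).1
      have hcast : ((⟨(m : ℕ), hm⟩ : Fin n)).castSucc = m := Fin.ext_iff.2 rfl
      rwa [hcast] at h
    · have : m = Fin.last n := by
        have h1 := m.isLt
        exact Fin.ext_iff.2 (by simp [Fin.val_last]; omega)
      rw [this]
      exact Or.inr (FF_last hn hf)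
  · exact FF_last hn hf

end Gbar

namespace Gbar
variable {n : ℕ} {Da Db : Finset (Fin (n + 1))} {f0 : GbarV n → GbarV n}

def gOf (Da Db : Finset (Fin (n+1))) (f0 : GbarV n → GbarV n) (j : Fin (n+1)) : Bool :=
  if j ∉ Da ∧ j ∉ Db then
    (if h : 0 < (j : ℕ) then
      decide (f0 (GbarV.c ⟨(j : ℕ) - 1, by omega⟩) = GbarV.a j) else true)
  else true

lemma good_gOf : good Da Db (gOf Da Db f0) := by
  intro j hj
  rw [gOf, if_neg (by tauto)]

lemma recon_c (hn : 1 ≤ n) (hf : f0 ∈ FF Da Db) (i : Fin n) :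
    f0 (.c i) = pcD Da Db (gOf Da Db f0) i := by
  have hC := FF_CC hn hf
  obtain ⟨CL1, CL2⟩ := FF_claim hf i
  by_cases hP : PD Da Db i.castSucc = 1
  · have hdir := CL2.1 hP
    rw [pcD, if_pos hP]
    have hPp : PDp Da Db i.succ = 1 := by rw [← PD_castSucc_eq_PDp_succ]; exact hP
    have hPD := PD_sub_PDp Da Db i.succ
    have hC1 := hC.1 i.succ
    rw [colT]
    by_cases hDa : i.succ ∈ Da
    · have hDb : i.succ ∉ Db := by
        intro hDb
        have hs1 : sD Da Db i.succ = 1 := (sD_eq_one_iff Da Db _).2 ⟨hDa, hDb⟩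
        omega
      rw [if_pos hDa]
      rcases hdir with h | h
      · exfalso
        have hm := (hf.1 (.c i) (by simp)).1
        rw [h] at hm
        simp at hm
        exact hm hDa
      · exact h
    · by_cases hDb : i.succ ∈ Db
      · rw [if_neg hDa, if_pos hDb]
        rcases hdir with h | h
        · exact h
        · exfalso
          have hm := (hf.1 (.c i) (by simp)).1
          rw [h] at hm
          simp at hm
          exact hm hDb
      · rw [if_neg hDa, if_neg hDb]
        have hpos : 0 < ((i.succ : Fin (n+1)) : ℕ) := by simp [Fin.val_succ]
        have hidx : (⟨((i.succ : Fin (n+1)) : ℕ) - 1, by omega⟩ : Fin n) = i :=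
          Fin.ext_iff.2 (by simp [Fin.val_succ])
        have hg : gOf Da Db f0 i.succ = decide (f0 (.c i) = .a i.succ) := by
          rw [gOf, if_pos ⟨hDa, hDb⟩, dif_pos hpos, hidx]
        rcases hdir with h | h
        · have hgt : gOf Da Db f0 i.succ = true := by rw [hg]; simp [h]
          rw [if_pos (by rw [hgt]), h]
        · have hgf : gOf Da Db f0 i.succ = false := by rw [hg]; simp [h]
          rw [if_neg (by rw [hgf]; simp), h]
  · have hP0 : PD Da Db i.castSucc = 0 := CL1.resolve_right hP
    have hndir := fun h => hP (CL2.2 h)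
    have hdir' : f0 (.c i) = .a i.castSucc ∨ f0 (.c i) = .b i.castSucc := by
      rcases FF_c hf i with h | h | h | h
      · exact Or.inl h
      · exact Or.inr h
      · exact absurd (Or.inl h) hndir
      · exact absurd (Or.inr h) hndir
    rw [pcD, if_neg hP, colT]
    have hs1 : sD Da Db i.castSucc ≠ 1 := fun h => hP (PD_of_s_one Da Db hC h)
    by_cases hDa : i.castSucc ∈ Da
    · have hDb : i.castSucc ∉ Db := fun h => hs1 ((sD_eq_one_iff Da Db _).2 ⟨hDa, h⟩)
      rw [if_pos hDa]
      rcases hdir' with h | h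
      · exfalso
        have hm := (hf.1 (.c i) (by simp)).1
        rw [h] at hm
        simp at hm
        exact hm hDa
      · exact h
    · by_cases hDb : i.castSucc ∈ Db
      · rw [if_neg hDa, if_pos hDb]
        rcases hdir' with h | h
        · exact h
        · exfalso
          have hm := (hf.1 (.c i) (by simp)).1
          rw [h] at hm
          simp at hm
          exact hm hDb
      · rw [if_neg hDa, if_neg hDb]
        have hs := (sD_eq_neg_one_iff Da Db _).2 ⟨hDa, hDb⟩
        obtain ⟨hPj, hPpj, hj0, hjl⟩ := of_s_neg_one Da Db hC hs
        obtain ⟨il, hil⟩ := exists_succ_eq hj0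
        have hPDl : PD Da Db il.castSucc = 1 := by
          rw [PD_castSucc_eq_PDp_succ, hil]; exact hPpj
        have hdirl := (FF_claim hf il).2.1 hPDl
        rw [hil] at hdirl
        have hne : il ≠ i := by
          intro h
          rw [h] at hil
          have := Fin.ext_iff.1 hil
          simp [Fin.val_succ] at this
        have hpos : 0 < ((i.castSucc : Fin (n+1)) : ℕ) := by
          rcases Nat.eq_zero_or_pos ((i.castSucc : Fin (n+1)) : ℕ) with h | h
          · exact absurd (Fin.ext_iff.2 h) hj0
          · exact h
        have hidx : (⟨((i.castSucc : Fin (n+1)) : ℕ) - 1, by omega⟩ : Fin n) = il :=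
          Fin.ext_iff.2 (show ((i.castSucc : Fin (n+1)) : ℕ) - 1 = (il : ℕ) by
            have := Fin.ext_iff.1 hil
            simp only [Fin.val_succ] at this
            omega)
        have hgval : gOf Da Db f0 i.castSucc = decide (f0 (.c il) = .a i.castSucc) := by
          rw [gOf, if_pos ⟨hDa, hDb⟩, dif_pos hpos, hidx]
        rcases hdirl with hl | hl
        · have hgt : gOf Da Db f0 i.castSucc = true := by rw [hgval]; simp [hl]
          rw [if_neg (by rw [hgt]; simp)]
          rcases hdir' with h | h
          · exfalso
            rw [← hl] at h
            have h2 := FF_inj hf (c_mem_SS Da Db _) (c_mem_SS Da Db _) h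
            simp at h2
            exact hne h2.symm
          · exact h
        · have hgf : gOf Da Db f0 i.castSucc = false := by rw [hgval]; simp [hl]
          rw [if_pos (by rw [hgf])]
          rcases hdir' with h | h
          · exact h
          · exfalso
            rw [← hl] at h
            have h2 := FF_inj hf (c_mem_SS Da Db _) (c_mem_SS Da Db _) h
            simp at h2
            exact hne h2.symm

lemma recon (hn : 1 ≤ n) (hf : f0 ∈ FF Da Db) : f0 = fD Da Db (gOf Da Db f0) := by
  have hC := FF_CC hn hf
  funext v
  cases v with
  | u => rw [FF_u hf]; rfl
  | m => rw [FF_m hf]; rfl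
  | u' => rw [FF_u' hf]; rfl
  | m' => rw [FF_m' hf]; rfl
  | c i => rw [recon_c hn hf i]; rfl
  | a j =>
    by_cases hDa : j ∈ Da
    · rw [hf.2 (.a j) (by simp [hDa]), fD_a, if_pos hDa]
    · obtain ⟨i, hi, hfa, hfc⟩ := FF_a hf hDa
      have h1 : pcD Da Db (gOf Da Db f0) i = .a j := by
        rw [← recon_c hn hf i]
        exact hfc
      have h2 := (pc_inv (g := gOf Da Db f0) hC i).2.2
      rw [h1] at h2
      rw [hfa]
      exact h2.symm
  | b j =>
    by_cases hDb : j ∈ Db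
    · rw [hf.2 (.b j) (by simp [hDb]), fD_b, if_pos hDb]
    · obtain ⟨i, hi, hfb, hfc⟩ := FF_b hf hDb
      have h1 : pcD Da Db (gOf Da Db f0) i = .b j := by
        rw [← recon_c hn hf i]
        exact hfc
      have h2 := (pc_inv (g := gOf Da Db f0) hC i).2.2
      rw [h1] at h2
      rw [hfb]
      exact h2.symm

lemma fD_inj (hC : CC Da Db) {g g' : Fin (n+1) → Bool}
    (hg : good Da Db g) (hg' : good Da Db g')
    (h : fD Da Db g = fD Da Db g') : g = g' := by
  funext j
  by_cases hDab : j ∉ Da ∧ j ∉ Db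
  · have hs := (sD_eq_neg_one_iff Da Db j).2 hDab
    obtain ⟨hPj, hPpj, hj0, hjl⟩ := of_s_neg_one Da Db hC hs
    obtain ⟨il, hil⟩ := exists_succ_eq hj0
    have hPDl : PD Da Db il.castSucc = 1 := by
      rw [PD_castSucc_eq_PDp_succ, hil]; exact hPpj
    have h1 : pcD Da Db g il = pcD Da Db g' il := by
      have := congrFun h (.c il)
      rwa [fD_c, fD_c] at this
    rw [pcD, pcD, if_pos hPDl, if_pos hPDl, hil, colT, colT, if_neg hDab.1,
      if_neg hDab.1, if_neg hDab.2, if_neg hDab.2] at h1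
    by_cases hgj : g j = true <;> by_cases hgj' : g' j = true
    · rw [hgj, hgj']
    · exfalso
      rw [if_pos (by rw [hgj]), if_neg (by simp [hgj'])] at h1
      exact absurd h1 (by simp)
    · exfalso
      rw [if_neg (by simp [hgj]), if_pos (by rw [hgj'])] at h1
      exact absurd h1 (by simp)
    · rw [Bool.not_eq_true] at hgj hgj'
      rw [hgj, hgj']
  · rw [hg j (by tauto), hg' j (by tauto)]

end Gbar

namespace Gbar
variable {n : ℕ} {Da Db : Finset (Fin (n + 1))}

lemma FF_eq (hn : 1 ≤ n) (hC : CC Da Db) :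
    FF Da Db = fD Da Db '' {g | good Da Db g} := by
  ext f0
  constructor
  · intro hf
    exact ⟨gOf Da Db f0, good_gOf, (recon hn hf).symm⟩
  · rintro ⟨g, hg, rfl⟩
    exact mem_FF hC

lemma FF_empty (hn : 1 ≤ n) (hnC : ¬ CC Da Db) : FF Da Db = ∅ := by
  ext f0
  simp only [Set.mem_empty_iff_false, iff_false]
  intro hf
  exact hnC (FF_CC hn hf)

open Classical in
noncomputable def Ext (Da Db : Finset (Fin (n+1))) :
    (↥(SS Da Db : Set (GbarV n)) → ↥(SS Da Db : Set (GbarV n))) → (GbarV n → GbarV n) :=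
  fun f v => if h : v ∈ SS Da Db then ((f ⟨v, h⟩ : ↥(SS Da Db : Set (GbarV n))) : GbarV n) else v

lemma Ext_apply_mem (f : ↥(SS Da Db : Set (GbarV n)) → ↥(SS Da Db : Set (GbarV n)))
    {v : GbarV n} (h : v ∈ SS Da Db) : Ext Da Db f v = (f ⟨v, h⟩ : GbarV n) :=
  dif_pos h

lemma Ext_apply_not_mem (f : ↥(SS Da Db : Set (GbarV n)) → ↥(SS Da Db : Set (GbarV n)))
    {v : GbarV n} (h : v ∉ SS Da Db) : Ext Da Db f v = v :=
  dif_neg h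

lemma Ext_injective : Function.Injective (Ext Da Db) := by
  intro f f' h
  funext x
  obtain ⟨v, hv⟩ := x
  apply Subtype.ext
  have := congrFun h v
  rwa [Ext_apply_mem f hv, Ext_apply_mem f' hv] at this

lemma Ext_image :
    Ext Da Db '' invSet ((GbarGraph n).induce (SS Da Db)) = FF Da Db := by
  ext f0
  constructor
  · rintro ⟨f, hf, rfl⟩
    constructor
    · intro v hv
      have h1 := (hf ⟨v, hv⟩).1
      have h2 := (hf ⟨v, hv⟩).2
      rw [SimpleGraph.comap_adj] at h1
      refine ⟨?_, ?_, ?_⟩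
      · rw [Ext_apply_mem f hv]
        exact (f ⟨v, hv⟩).2
      · rw [Ext_apply_mem f hv]
        exact h1
      · rw [Ext_apply_mem f hv, Ext_apply_mem f (f ⟨v, hv⟩).2]
        rw [show (⟨((f ⟨v, hv⟩ : ↥(SS Da Db : Set (GbarV n))) : GbarV n), (f ⟨v, hv⟩).2⟩ :
            ↥(SS Da Db : Set (GbarV n))) = f ⟨v, hv⟩ from rfl]
        rw [h2]
    · intro v hv
      rw [Ext_apply_not_mem f hv]
  · intro hf
    refine ⟨fun x => ⟨f0 x.1, (hf.1 x.1 x.2).1⟩, ?_, ?_⟩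
    · intro x
      constructor
      · rw [SimpleGraph.comap_adj]
        exact (hf.1 x.1 x.2).2.1
      · apply Subtype.ext
        exact (hf.1 x.1 x.2).2.2
    · funext v
      by_cases hv : v ∈ SS Da Db
      · rw [Ext_apply_mem _ hv]
      · rw [Ext_apply_not_mem _ hv]
        exact (hf.2 v hv).symm

lemma count_good :
    {g : Fin (n+1) → Bool | good Da Db g}.ncard =
      2 ^ (Finset.univ.filter fun j => sD Da Db j = -1).card := by
  classical
  have e : {g : Fin (n+1) → Bool // good Da Db g} ≃
      ({j : Fin (n+1) // sD Da Db j = -1} → Bool) :=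
    { toFun := fun gp j => gp.1 j.1
      invFun := fun h =>
        ⟨fun j => if hj : sD Da Db j = -1 then h ⟨j, hj⟩ else true, by
          intro j hj
          have : ¬ sD Da Db j = -1 := by
            rw [sD_eq_neg_one_iff]
            tauto
          exact dif_neg this⟩
      left_inv := by
        intro gp
        apply Subtype.ext
        funext j
        by_cases hj : sD Da Db j = -1
        · simp [hj]
        · have hmem : j ∈ Da ∨ j ∈ Db := by
            by_contra hcon
            push_neg at hcon
            exact hj ((sD_eq_neg_one_iff Da Db j).2 hcon)
          simp [hj, gp.2 j hmem]
      right_inv := by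
        intro h
        funext j
        simp [j.2] }
  have h1 : {g : Fin (n+1) → Bool | good Da Db g}.ncard =
      Nat.card {g : Fin (n+1) → Bool // good Da Db g} :=
    (Nat.card_coe_set_eq _).symm
  rw [h1, Nat.card_congr e, Nat.card_fun]
  congr 1
  · simp
  · rw [Nat.card_eq_fintype_card, Fintype.card_subtype]

end Gbar


namespace Gbar
variable {n : ℕ} (Da Db : Finset (Fin (n + 1)))

lemma Iic_last : Finset.Iic (Fin.last n) = (Finset.univ : Finset (Fin (n+1))) := by
  ext x
  simp [Finset.mem_Iic, Fin.le_last]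

end Gbar

/-- Let `D` be a subset of the distinguished vertices of `Ḡₙ`, recorded by the index
sets `Da = {j | a j ∈ D}` and `Db = {j | b j ∈ D}`.  With `s j = 1` if both `a j` and
`b j` lie in `D`, `s j = −1` if neither does, and `s j = 0` if exactly one does, the
number of perfect matchings of `Ḡₙ − D` is `2^{#{j | s j = −1}}` if every partial sum of
`(s 0, …, s n)` is `0` or `1` and the total sum is `1`, and `0` otherwise. -/

theorem Gbar_matchings (n : ℕ) (hn : 1 ≤ n)
    (Da Db : Finset (Fin (n + 1)))
    (s : Fin (n + 1) → ℤ)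
    (hs : ∀ j, s j = (if j ∈ Da then 1 else 0) + (if j ∈ Db then 1 else 0) - 1) :
    numPM ((GbarGraph n).induce
        {v | ¬ ((∃ j ∈ Da, v = GbarV.a j) ∨ (∃ j ∈ Db, v = GbarV.b j))}) =
      if (∀ m : Fin (n + 1),
            (∑ x ∈ Finset.Iic m, s x) = 0 ∨ (∑ x ∈ Finset.Iic m, s x) = 1) ∧
          (∑ x, s x) = 1
      then 2 ^ (Finset.univ.filter fun j => s j = -1).card
      else 0 := by
  have hseq : s = Gbar.sD Da Db := funext fun j => by rw [hs j]; rfl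
  subst hseq
  have hTot : ∑ x, Gbar.sD Da Db x = Gbar.PD Da Db (Fin.last n) := by
    rw [Gbar.PD, Gbar.Iic_last]
  have hset : {v : GbarV n | ¬ ((∃ j ∈ Da, v = GbarV.a j) ∨ (∃ j ∈ Db, v = GbarV.b j))} =
      Gbar.SS Da Db := rfl
  rw [hset, numPM_eq_invSet]
  have h2 : (invSet ((GbarGraph n).induce (Gbar.SS Da Db))).ncard =
      (Gbar.FF Da Db).ncard := by
    rw [← Gbar.Ext_image, Set.ncard_image_of_injOn Gbar.Ext_injective.injOn]
  rw [h2]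
  by_cases hC : Gbar.CC Da Db
  · rw [if_pos ⟨fun m => hC.1 m, by rw [hTot]; exact hC.2⟩]
    have hinj : Set.InjOn (Gbar.fD Da Db) {g | Gbar.good Da Db g} :=
      fun g hg g' hg' h => Gbar.fD_inj hC hg hg' h
    rw [Gbar.FF_eq hn hC, Set.ncard_image_of_injOn hinj]
    exact Gbar.count_good
  · rw [if_neg (fun hcond => hC ⟨fun m => hcond.1 m, by rw [← hTot]; exact hcond.2⟩)]
    rw [Gbar.FF_empty hn hC, Set.ncard_empty]
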